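/- Define Φ(x̂, θ̂, λ̂, ν̂) = ∑_i f_i(x_i) + (x̂ − x̂*)ᵀθ̂ + ℏ x̂ᵀ𝐋x̂ + ∑_{i,j} λ_{ij} g_{ij}(x_i) + ∑_{i,j} ν_{ij} h_{ij}(x_i), where f_i, g_{ij} are convex differentiable, h_{ij} affine, 𝐋 PSD with 𝐋x̂* = 0, ℏ ≥ 0, x̂* = 𝟙_N ⊗ x*, and (x*, λ*, ν*) satisfies the KKT conditions for minimizing ∑f_i subject to g_{ij} ≤ 0, h_{ij} = 0. Let θ̂* = −(∇F(x̂*) + λ*⊙∇G(x̂*) + ν*⊙∇H(x̂*)). Then for all x̂ ∈ ℝ^{nN}, θ̂ ∈ ℝ^{nN}, λ̂ ⪰ 0, ν̂: Φ(x̂*, θ̂, λ̂, ν̂) ≤ Φ(x̂*, θ̂*, λ̂*, ν̂*) ≤ Φ(x̂, θ̂*, λ̂*, ν̂*). -/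

import Mathlib

open RealInnerProductSpace

lemma grad_ineq {E : Type*} [NormedAddCommGroup E] [InnerProductSpace ℝ E] [CompleteSpace E]
    {f : E → ℝ} {gr x y : E} (hc : ConvexOn ℝ Set.univ f) (hg : HasGradientAt f gr x) :
    f x + ⟪gr, y - x⟫ ≤ f y := by
  set c : ℝ → E := fun t => t • (y - x) + x with hc_def
  have hline : HasDerivAt c (y - x) 0 := by
    simpa [hc_def] using ((hasDerivAt_id (0 : ℝ)).smul_const (y - x)).add_const x
  have hF : HasFDerivAt f (InnerProductSpace.toDual ℝ E gr) (c 0) := by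
    simpa [hc_def] using hg.hasFDerivAt
  have hφ : HasDerivAt (f ∘ c) ⟪gr, y - x⟫ 0 := by
    simpa using hF.comp_hasDerivAt 0 hline
  have hconv : ConvexOn ℝ Set.univ (f ∘ c) := by
    have h2 := hc.comp_affineMap (AffineMap.lineMap x y)
    have h3 : (f ∘ c) = f ∘ (AffineMap.lineMap x y) := by
      funext t
      simp only [hc_def, Function.comp_apply]
      congr 1
    rw [h3]; simpa using h2
  have hs := hconv.le_slope_of_hasDerivAt (Set.mem_univ 0) (Set.mem_univ 1) one_pos hφ
  have h0 : (f ∘ c) 0 = f x := by simp [hc_def]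
  have h1 : (f ∘ c) 1 = f y := by simp [hc_def]
  rw [slope_def_field, h0, h1] at hs
  simp at hs
  linarith

/-- Saddle point property of the modified Lagrangian
`Φ(x̂,θ̂,λ̂,ν̂) = ∑ f_i(x_i) + (x̂-x̂*)ᵀθ̂ + ℏ x̂ᵀ𝐋x̂ + ∑ λ_{ij} g_{ij}(x_i)
  + ∑ ν_{ij} h_{ij}(x_i)` at `(x̂*, θ̂*, λ̂*, ν̂*)`. -/
theorem stmt14 (n N : ℕ) (r s : Fin N → ℕ)
    (f : Fin N → EuclideanSpace ℝ (Fin n) → ℝ)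
    (f' : Fin N → EuclideanSpace ℝ (Fin n) → EuclideanSpace ℝ (Fin n))
    (g : (i : Fin N) → Fin (r i) → EuclideanSpace ℝ (Fin n) → ℝ)
    (g' : (i : Fin N) → Fin (r i) → EuclideanSpace ℝ (Fin n) → EuclideanSpace ℝ (Fin n))
    (h : (i : Fin N) → Fin (s i) → EuclideanSpace ℝ (Fin n) → ℝ)
    (h' : (i : Fin N) → Fin (s i) → EuclideanSpace ℝ (Fin n))
    (hf_conv : ∀ i, ConvexOn ℝ Set.univ (f i))
    (hf_grad : ∀ i x, HasGradientAt (f i) (f' i x) x)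
    (hg_conv : ∀ i j, ConvexOn ℝ Set.univ (g i j))
    (hg_grad : ∀ i j x, HasGradientAt (g i j) (g' i j x) x)
    (h_affine : ∀ i j x y, h i j x - h i j y = ⟪h' i j, x - y⟫)
    (L : Matrix (Fin N) (Fin N) ℝ) (hL : L.PosSemidef) (ℏ : ℝ) (hℏ : 0 ≤ ℏ)
    (xstar : EuclideanSpace ℝ (Fin n))
    (hLxstar : ∀ i, (∑ j, L i j) • xstar = (0 : EuclideanSpace ℝ (Fin n)))
    (lamstar : (i : Fin N) → Fin (r i) → ℝ) (nustar : (i : Fin N) → Fin (s i) → ℝ)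
    (hKKT1 : ∀ i j, g i j xstar ≤ 0)
    (hKKT2 : ∀ i j, h i j xstar = 0)
    (hKKT3 : ∀ i j, 0 ≤ lamstar i j)
    (hKKT4 : ∀ i j, lamstar i j * g i j xstar = 0)
    (hKKT5 : ∑ i, f' i xstar + ∑ i, ∑ j, lamstar i j • g' i j xstar
        + ∑ i, ∑ j, nustar i j • h' i j = 0) :
    let Φ : (Fin N → EuclideanSpace ℝ (Fin n)) → (Fin N → EuclideanSpace ℝ (Fin n)) →
        ((i : Fin N) → Fin (r i) → ℝ) → ((i : Fin N) → Fin (s i) → ℝ) → ℝ :=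
      fun x θ lam nu => (∑ i, f i (x i)) + (∑ i, ⟪x i - xstar, θ i⟫)
        + ℏ * ∑ i, ∑ j, L i j * ⟪x i, x j⟫
        + ∑ i, ∑ j, lam i j * g i j (x i) + ∑ i, ∑ j, nu i j * h i j (x i)
    let θstar : Fin N → EuclideanSpace ℝ (Fin n) := fun i =>
      -(f' i xstar + ∑ j, lamstar i j • g' i j xstar + ∑ j, nustar i j • h' i j)
    ∀ (x θ : Fin N → EuclideanSpace ℝ (Fin n))
      (lam : (i : Fin N) → Fin (r i) → ℝ) (nu : (i : Fin N) → Fin (s i) → ℝ),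
      (∀ i j, 0 ≤ lam i j) →
      Φ (fun _ => xstar) θ lam nu ≤ Φ (fun _ => xstar) θstar lamstar nustar ∧
        Φ (fun _ => xstar) θstar lamstar nustar ≤ Φ x θstar lamstar nustar := by
  intro Φ θstar x θ lam nu hlam
  -- common facts
  have hlamstar_sum : ∀ i, ∑ j, lamstar i j * g i j xstar = 0 := fun i =>
    Finset.sum_eq_zero fun j _ => hKKT4 i j
  have hnu_zero : ∀ (ν : (i : Fin N) → Fin (s i) → ℝ) i, ∑ j, ν i j * h i j xstar = 0 :=
    fun ν i => Finset.sum_eq_zero fun j _ => by rw [hKKT2 i j, mul_zero]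
  have hTstar : ∀ i, ∑ j, L i j * ⟪xstar, xstar⟫ = (0:ℝ) := by
    intro i
    have h1 : ⟪(∑ j, L i j) • xstar, xstar⟫ = (0:ℝ) := by rw [hLxstar i]; simp
    rw [real_inner_smul_left] at h1
    rw [← Finset.sum_mul]
    exact h1
  constructor
  · -- first inequality
    simp only [Φ, sub_self, inner_zero_left, Finset.sum_const_zero, add_zero]
    have hA : ∑ i, ∑ j, lam i j * g i j xstar ≤ 0 :=
      Finset.sum_nonpos fun i _ => Finset.sum_nonpos fun j _ =>
        mul_nonpos_of_nonneg_of_nonpos (hlam i j) (hKKT1 i j)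
    have hB : ∑ i, ∑ j, lamstar i j * g i j xstar = 0 :=
      Finset.sum_eq_zero fun i _ => hlamstar_sum i
    have hC : ∑ i, ∑ j, nu i j * h i j xstar = 0 :=
      Finset.sum_eq_zero fun i _ => hnu_zero nu i
    have hD : ∑ i, ∑ j, nustar i j * h i j xstar = 0 :=
      Finset.sum_eq_zero fun i _ => hnu_zero nustar i
    linarith
  · -- second inequality
    simp only [Φ, sub_self, inner_zero_left, Finset.sum_const_zero, add_zero]
    -- quadratic term nonneg
    have hQ : 0 ≤ ∑ i, ∑ j, L i j * ⟪x i, x j⟫ := by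
      have key : ∀ i j : Fin N, L i j * ⟪x i, x j⟫ = ∑ k, x i k * (L i j * x j k) := by
        intro i j
        simp only [PiLp.inner_apply, RCLike.inner_apply, conj_trivial, Finset.mul_sum]
        exact Finset.sum_congr rfl fun k _ => by ring
      calc (0:ℝ) ≤ ∑ k : Fin n, ∑ i, ∑ j, x i k * (L i j * x j k) := by
            refine Finset.sum_nonneg fun k _ => ?_
            have := hL.dotProduct_mulVec_nonneg (fun i => x i k)
            simpa [dotProduct, Matrix.mulVec, Finset.mul_sum] using this
        _ = ∑ i, ∑ j, L i j * ⟪x i, x j⟫ := by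
            simp_rw [key]
            rw [Finset.sum_comm]
            exact Finset.sum_congr rfl fun i _ => Finset.sum_comm
    -- per-agent key inequality
    have key : ∀ i, f i xstar ≤ f i (x i) + ⟪x i - xstar, θstar i⟫
        + ∑ j, lamstar i j * g i j (x i) + ∑ j, nustar i j * h i j (x i) := by
      intro i
      set d : EuclideanSpace ℝ (Fin n) := x i - xstar with hd
      have hfi : f i xstar + ⟪f' i xstar, d⟫ ≤ f i (x i) :=
        grad_ineq (hf_conv i) (hf_grad i xstar)
      have hgsum : ∑ j, (lamstar i j * g i j xstar + lamstar i j * ⟪g' i j xstar, d⟫)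
          ≤ ∑ j, lamstar i j * g i j (x i) := by
        refine Finset.sum_le_sum fun j _ => ?_
        have hgj : g i j xstar + ⟪g' i j xstar, d⟫ ≤ g i j (x i) :=
          grad_ineq (hg_conv i j) (hg_grad i j xstar)
        nlinarith [hKKT3 i j]
      have hhsum : ∑ j, nustar i j * h i j (x i) = ∑ j, nustar i j * ⟪h' i j, d⟫ := by
        refine Finset.sum_congr rfl fun j _ => ?_
        have := h_affine i j (x i) xstar
        rw [hKKT2 i j, sub_zero] at this
        rw [this]
      have hθ : ⟪d, θstar i⟫ = -(⟪f' i xstar, d⟫ + ∑ j, lamstar i j * ⟪g' i j xstar, d⟫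
          + ∑ j, nustar i j * ⟪h' i j, d⟫) := by
        simp only [θstar, inner_neg_right, inner_add_right, inner_sum,
          real_inner_smul_right, real_inner_comm d]
      rw [Finset.sum_add_distrib, hlamstar_sum i] at hgsum
      rw [hhsum, hθ]
      linarith
    have hsum : ∑ i, f i xstar ≤ ∑ i, (f i (x i) + ⟪x i - xstar, θstar i⟫
        + ∑ j, lamstar i j * g i j (x i) + ∑ j, nustar i j * h i j (x i)) :=
      Finset.sum_le_sum fun i _ => key i
    rw [Finset.sum_add_distrib, Finset.sum_add_distrib, Finset.sum_add_distrib] at hsum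
    have hB : ∑ i, ∑ j, lamstar i j * g i j xstar = 0 :=
      Finset.sum_eq_zero fun i _ => hlamstar_sum i
    have hD : ∑ i, ∑ j, nustar i j * h i j xstar = 0 :=
      Finset.sum_eq_zero fun i _ => hnu_zero nustar i
    have hT : ∑ i, ∑ j, L i j * ⟪xstar, xstar⟫ = (0:ℝ) :=
      Finset.sum_eq_zero fun i _ => hTstar i
    have hQℏ : 0 ≤ ℏ * ∑ i, ∑ j, L i j * ⟪x i, x j⟫ := mul_nonneg hℏ hQ
    rw [hT]
    linarith
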